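/- Let μ > 0, λ ≥ 0, and let H : (Fin 3)⁶ → ℝ be a sixth-order tensor satisfying the symmetries H_{ijklmn} = H_{ikjlmn} = H_{ijklnm} = H_{lmnijk} and positive with constant α > 0 on symmetric triadics. Suppose z : ℝ³ → ℝ³ and χ̃ : ℝ³ → (Fin 3)³ → ℝ are smooth, compactly supported, χ̃(x) is a symmetric triadic for every x, and the pair (z, χ̃) satisfies on all of ℝ³ the homogeneous second-order system: for each k, −(Δ*·z)_k + Σ_{i,j} ∂_i∂_j (H⫶χ̃)_{ijk} = 0, and for each (i,j,k), −(H⫶∇e(z))_{ijk} + (H⫶χ̃)_{ijk} = 0. Then z ≡ 0 and χ̃ ≡ 0. -/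

import Mathlib

open MeasureTheory

noncomputable section

/-- Points of `ℝ³`. -/
abbrev V : Type := Fin 3 → ℝ

/-- `i`-th partial derivative of a scalar field on `ℝ³`. -/
noncomputable def pd (i : Fin 3) (f : V → ℝ) : V → ℝ :=
  fun x => fderiv ℝ f x (Pi.single i 1)

/-- Divergence of a vector field. -/
noncomputable def divg (u : V → V) : V → ℝ :=
  fun x => ∑ j : Fin 3, pd j (fun y => u y j) x

/-- Componentwise Laplacian of a vector field. -/
noncomputable def vlap (u : V → V) (k : Fin 3) : V → ℝ :=
  fun x => ∑ j : Fin 3, pd j (pd j (fun y => u y k)) x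

/-- The strain tensor `e_{jk}(u) = ½(∂_j u_k + ∂_k u_j)`. -/
noncomputable def strain (u : V → V) (j k : Fin 3) : V → ℝ :=
  fun x => (1/2) * (pd j (fun y => u y k) x + pd k (fun y => u y j) x)

/-- The Lamé (Navier) operator `(Δ*·u)_k = μ (Δu)_k + (λ+μ) ∂_k (div u)`. -/
noncomputable def navier (lam mu : ℝ) (u : V → V) (k : Fin 3) : V → ℝ :=
  fun x => mu * vlap u k x + (lam + mu) * pd k (divg u) x

/-- The gradient of the strain, `(∇e(u))_{ijk} = ∂_i e_{jk}(u)`. -/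
noncomputable def gradStrain (u : V → V) (i j k : Fin 3) : V → ℝ :=
  pd i (strain u j k)

/-- Contraction of a sixth order tensor with a triadic:
`(H⫶κ)_{ijk} = Σ_{l,m,n} H_{ijklmn} κ_{lmn}`. -/
def Hcontr (H : Fin 3 → Fin 3 → Fin 3 → Fin 3 → Fin 3 → Fin 3 → ℝ)
    (κ : Fin 3 → Fin 3 → Fin 3 → ℝ) (i j k : Fin 3) : ℝ :=
  ∑ l : Fin 3, ∑ m : Fin 3, ∑ n : Fin 3, H i j k l m n * κ l m n

/-- A triadic is symmetric if it is symmetric in its last two indices. -/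
def SymTriadic (κ : Fin 3 → Fin 3 → Fin 3 → ℝ) : Prop :=
  ∀ i j k, κ i j k = κ i k j

/-- The symmetries `H_{ijklmn} = H_{ikjlmn} = H_{ijklnm} = H_{lmnijk}`. -/
def Hsym (H : Fin 3 → Fin 3 → Fin 3 → Fin 3 → Fin 3 → Fin 3 → ℝ) : Prop :=
  ∀ i j k l m n, H i j k l m n = H i k j l m n ∧
    H i j k l m n = H i j k l n m ∧ H i j k l m n = H l m n i j k

/-- Positivity of `H` with constant `α` on symmetric triadics. -/
def Hpos (H : Fin 3 → Fin 3 → Fin 3 → Fin 3 → Fin 3 → Fin 3 → ℝ) (α : ℝ) : Prop :=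
  ∀ κ : Fin 3 → Fin 3 → Fin 3 → ℝ, SymTriadic κ →
    α * (∑ i : Fin 3, ∑ j : Fin 3, ∑ k : Fin 3, (κ i j k)^2) ≤
      ∑ i : Fin 3, ∑ j : Fin 3, ∑ k : Fin 3, ∑ l : Fin 3, ∑ m : Fin 3, ∑ n : Fin 3,
        κ i j k * H i j k l m n * κ l m n

/-- The double stress tensor of Mindlin Form II gradient elasticity with constitutive
parameters `a₁,…,a₅`. -/
noncomputable def dstress (a1 a2 a3 a4 a5 : ℝ) (u : V → V) (i j k : Fin 3) : V → ℝ :=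
  fun x =>
    (1/2) * a1 * ((if j = k then (1:ℝ) else 0) * vlap u i x
      + (if i = j then (1:ℝ) else 0) * pd k (divg u) x
      + (if j = k then (1:ℝ) else 0) * pd i (divg u) x
      + (if i = k then (1:ℝ) else 0) * pd j (divg u) x)
    + 2 * a2 * (if j = k then (1:ℝ) else 0) * pd i (divg u) x
    + (1/2) * a3 * ((if i = j then (1:ℝ) else 0) * vlap u k x
      + (if i = j then (1:ℝ) else 0) * pd k (divg u) x
      + (if i = k then (1:ℝ) else 0) * vlap u j x
      + (if i = k then (1:ℝ) else 0) * pd j (divg u) x)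
    + a4 * (pd i (pd j (fun y => u y k)) x + pd i (pd k (fun y => u y j)) x)
    + (1/2) * a5 * (2 * pd j (pd k (fun y => u y i)) x
      + pd i (pd j (fun y => u y k)) x + pd i (pd k (fun y => u y j)) x)
lemma contDiff_pd {f : V → ℝ} (hf : ContDiff ℝ (⊤:ℕ∞) f) (i : Fin 3) :
    ContDiff ℝ (⊤:ℕ∞) (pd i f) :=
  (hf.fderiv_right (m := (⊤:ℕ∞)) (by exact_mod_cast le_top)).clm_apply contDiff_const

lemma diff_pd {f : V → ℝ} (hf : ContDiff ℝ (⊤:ℕ∞) f) (i : Fin 3) :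
    Differentiable ℝ (pd i f) :=
  (contDiff_pd hf i).differentiable (by simp)

lemma hcs_pd {f : V → ℝ} (hfc : HasCompactSupport f) (i : Fin 3) :
    HasCompactSupport (pd i f) :=
  (hfc.fderiv (𝕜 := ℝ)).comp_left (g := fun L : V →L[ℝ] ℝ => L (Pi.single i 1)) rfl

lemma ibp (i : Fin 3) {f g : V → ℝ} (hf : ContDiff ℝ (⊤:ℕ∞) f) (hg : ContDiff ℝ (⊤:ℕ∞) g)
    (hfc : HasCompactSupport f) :
    ∫ x, f x * pd i g x = - ∫ x, pd i f x * g x := by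
  exact integral_mul_fderiv_eq_neg_fderiv_mul_of_integrable
    (((contDiff_pd hf i).continuous.mul hg.continuous).integrable_of_hasCompactSupport
      ((hcs_pd hfc i).mul_right))
    ((hf.continuous.mul (contDiff_pd hg i).continuous).integrable_of_hasCompactSupport
      (hfc.mul_right))
    ((hf.continuous.mul hg.continuous).integrable_of_hasCompactSupport (hfc.mul_right))
    (fun x _ => hf.differentiable (by simp) x) (fun x _ => hg.differentiable (by simp) x)

lemma pd_congr {f g : V → ℝ} (h : f = g) (i : Fin 3) (x : V) : pd i f x = pd i g x := by rw [h]

lemma pd_const (i : Fin 3) (c : ℝ) (x : V) : pd i (fun _ => c) x = 0 := by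
  simp [pd, fderiv_const]

lemma pd_add {f g : V → ℝ} (hf : Differentiable ℝ f) (hg : Differentiable ℝ g) (i : Fin 3)
    (x : V) : pd i (fun y => f y + g y) x = pd i f x + pd i g x := by
  unfold pd; rw [fderiv_fun_add (hf x) (hg x)]; rfl

lemma pd_const_mul {f : V → ℝ} (hf : Differentiable ℝ f) (c : ℝ) (i : Fin 3) (x : V) :
    pd i (fun y => c * f y) x = c * pd i f x := by
  unfold pd; rw [fderiv_const_mul (hf x) c]; rfl

lemma pd_sum {F : Fin 3 → V → ℝ} (hf : ∀ j, Differentiable ℝ (F j)) (i : Fin 3) (x : V) :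
    pd i (fun y => ∑ j : Fin 3, F j y) x = ∑ j : Fin 3, pd i (F j) x := by
  unfold pd
  rw [fderiv_fun_sum (fun j _ => (hf j) x)]
  simp

lemma pd_comm {f : V → ℝ} (hf : ContDiff ℝ (⊤:ℕ∞) f) (i j : Fin 3) (x : V) :
    pd i (pd j f) x = pd j (pd i f) x := by
  have hsymm : IsSymmSndFDerivAt ℝ f x :=
    (hf.contDiffAt).isSymmSndFDerivAt (by rw [minSmoothness_of_isRCLikeNormedField]; exact WithTop.coe_le_coe.mpr le_top)
  have hd : Differentiable ℝ (fderiv ℝ f) :=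
    (hf.fderiv_right (m := (⊤:ℕ∞)) (by exact_mod_cast le_top)).differentiable
      (by simp)
  have key : ∀ a b : Fin 3, pd a (pd b f) x
      = fderiv ℝ (fderiv ℝ f) x (Pi.single a 1) (Pi.single b 1) := by
    intro a b
    show fderiv ℝ (fun y => fderiv ℝ f y (Pi.single b 1)) x (Pi.single a 1) = _
    rw [fderiv_clm_apply (hd x) (differentiableAt_const _)]
    simp
  rw [key i j, key j i, hsymm]

lemma zero_of_integral_zero {f : V → ℝ} (hc : Continuous f) (hnn : ∀ x, 0 ≤ f x)
    (hcs : HasCompactSupport f) (hi : ∫ x, f x = 0) (x : V) : f x = 0 := by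
  have h1 : f =ᵐ[volume] (fun _ => (0:ℝ)) :=
    (integral_eq_zero_iff_of_nonneg hnn (hc.integrable_of_hasCompactSupport hcs)).mp hi
  have h2 : f = fun _ => (0:ℝ) :=
    (Continuous.ae_eq_iff_eq volume hc continuous_const).mp h1
  exact congrFun h2 x

lemma zero_of_pd_zero {f : V → ℝ} (hf : ContDiff ℝ (⊤:ℕ∞) f) (hcs : HasCompactSupport f)
    (h : ∀ i x, pd i f x = 0) (x : V) : f x = 0 := by
  have hfd : ∀ w : V, fderiv ℝ f w = 0 := by
    intro w
    ext v
    have hv : v = ∑ i : Fin 3, Pi.single i (v i) := (Finset.univ_sum_single v).symm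
    rw [ContinuousLinearMap.zero_apply, hv, map_sum]
    refine Finset.sum_eq_zero fun i _ => ?_
    have hsingle : (Pi.single i (v i) : V) = v i • (Pi.single i (1:ℝ) : V) := by
      rw [← Pi.single_smul, smul_eq_mul, mul_one]
    have h0 : fderiv ℝ f w (Pi.single i 1) = 0 := h i w
    rw [hsingle, (fderiv ℝ f w).map_smul, h0, smul_zero]
  obtain ⟨y, hy⟩ := Set.ne_univ_iff_exists_notMem _ |>.mp (hcs.ne_univ)
  have := is_const_of_fderiv_eq_zero (hf.differentiable (by simp)) hfd x y
  rw [this, image_eq_zero_of_notMem_tsupport hy]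

lemma integ_mul_left {f g : V → ℝ} (hf : Continuous f) (hg : Continuous g)
    (hc : HasCompactSupport f) : Integrable (fun x => f x * g x) :=
  (hf.mul hg).integrable_of_hasCompactSupport (hc.mul_right)

lemma integ_mul_right {f g : V → ℝ} (hf : Continuous f) (hg : Continuous g)
    (hc : HasCompactSupport g) : Integrable (fun x => f x * g x) :=
  (hf.mul hg).integrable_of_hasCompactSupport (hc.mul_left)

lemma sum_rot (g : Fin 3 → Fin 3 → Fin 3 → ℝ) :
    ∑ k : Fin 3, ∑ i : Fin 3, ∑ j : Fin 3, g k i j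
      = ∑ i : Fin 3, ∑ j : Fin 3, ∑ k : Fin 3, g k i j := by
  rw [Finset.sum_comm]
  exact Finset.sum_congr rfl fun i _ => Finset.sum_comm

lemma sym_pair_sum (a s : Fin 3 → Fin 3 → ℝ) (hs : ∀ j k, s j k = s k j) :
    ∑ j : Fin 3, ∑ k : Fin 3, a j k * s j k
      = ∑ j : Fin 3, ∑ k : Fin 3, (1/2) * (a j k + a k j) * s j k := by
  have h1 : ∑ j : Fin 3, ∑ k : Fin 3, a k j * s j k
      = ∑ j : Fin 3, ∑ k : Fin 3, a j k * s j k := by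
    rw [Finset.sum_comm]
    exact Finset.sum_congr rfl fun j _ => Finset.sum_congr rfl fun k _ => by rw [hs j k]
  have h2 : ∑ j : Fin 3, ∑ k : Fin 3, (1/2) * (a j k + a k j) * s j k
      = (1/2) * (∑ j : Fin 3, ∑ k : Fin 3, a j k * s j k)
        + (1/2) * (∑ j : Fin 3, ∑ k : Fin 3, a k j * s j k) := by
    simp only [Finset.mul_sum, ← Finset.sum_add_distrib]
    exact Finset.sum_congr rfl fun j _ => Finset.sum_congr rfl fun k _ => by ring
  rw [h2, h1]; ring

lemma expand_contr (H : Fin 3 → Fin 3 → Fin 3 → Fin 3 → Fin 3 → Fin 3 → ℝ)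
    (κ : Fin 3 → Fin 3 → Fin 3 → ℝ) :
    ∑ i : Fin 3, ∑ j : Fin 3, ∑ k : Fin 3, κ i j k * Hcontr H κ i j k
      = ∑ i : Fin 3, ∑ j : Fin 3, ∑ k : Fin 3, ∑ l : Fin 3, ∑ m : Fin 3, ∑ n : Fin 3,
          κ i j k * H i j k l m n * κ l m n := by
  refine Finset.sum_congr rfl fun i _ => Finset.sum_congr rfl fun j _ =>
    Finset.sum_congr rfl fun k _ => ?_
  unfold Hcontr
  simp only [Finset.mul_sum]
  exact Finset.sum_congr rfl fun l _ => Finset.sum_congr rfl fun m _ =>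
    Finset.sum_congr rfl fun n _ => by ring
/-- uniqueness for the homogeneous second order system among smooth compactly
supported fields. -/
theorem homogeneous_second_order_system_trivial
    (lam mu : ℝ) (hmu : 0 < mu) (hlam : 0 ≤ lam)
    (H : Fin 3 → Fin 3 → Fin 3 → Fin 3 → Fin 3 → Fin 3 → ℝ) (hH : Hsym H)
    (α : ℝ) (hα : 0 < α) (hpos : Hpos H α)
    (z : V → V) (χ : V → Fin 3 → Fin 3 → Fin 3 → ℝ)
    (hz : ContDiff ℝ (⊤ : ℕ∞) z) (hχ : ContDiff ℝ (⊤ : ℕ∞) χ)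
    (hzc : HasCompactSupport z) (hχc : HasCompactSupport χ)
    (hsym : ∀ x, SymTriadic (χ x))
    (heq1 : ∀ x : V, ∀ k : Fin 3,
      -(navier lam mu z k x)
        + (∑ i : Fin 3, ∑ j : Fin 3, pd i (pd j (fun y => Hcontr H (χ y) i j k)) x) = 0)
    (heq2 : ∀ x : V, ∀ i j k : Fin 3,
      -(Hcontr H (fun l m n => gradStrain z l m n x) i j k) + Hcontr H (χ x) i j k = 0) :
    (∀ x, z x = 0) ∧ (∀ x, ∀ i j k : Fin 3, χ x i j k = 0) := by
  have hlm : (0:ℝ) < lam + mu := by linarith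
  -- smoothness and support of components
  have hzk : ∀ k : Fin 3, ContDiff ℝ (⊤:ℕ∞) (fun y => z y k) := fun k => contDiff_pi.mp hz k
  have hzkc : ∀ k : Fin 3, HasCompactSupport (fun y => z y k) :=
    fun k => hzc.comp_left (g := fun v : V => v k) rfl
  have hχk : ∀ l m n : Fin 3, ContDiff ℝ (⊤:ℕ∞) (fun y => χ y l m n) := fun l m n =>
    contDiff_pi.mp (contDiff_pi.mp (contDiff_pi.mp hχ l) m) n
  have hT : ∀ i j k : Fin 3, ContDiff ℝ (⊤:ℕ∞) (fun y => Hcontr H (χ y) i j k) := by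
    intro i j k
    simp only [Hcontr]
    exact ContDiff.sum fun l _ => ContDiff.sum fun m _ => ContDiff.sum fun n _ =>
      contDiff_const.mul (hχk l m n)
  have hTc : ∀ i j k : Fin 3, HasCompactSupport (fun y => Hcontr H (χ y) i j k) := fun i j k =>
    hχc.comp_left (g := fun κ => Hcontr H κ i j k) (by simp [Hcontr])
  have hdivg : ContDiff ℝ (⊤:ℕ∞) (divg z) := by
    unfold divg
    exact ContDiff.sum fun j _ => contDiff_pd (hzk j) j
  -- strain and gradStrain facts
  have hgs : ∀ (i j k : Fin 3) (x : V), gradStrain z i j k x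
      = (1/2) * (pd i (pd j (fun y => z y k)) x + pd i (pd k (fun y => z y j)) x) := by
    intro i j k x
    unfold gradStrain strain
    rw [pd_const_mul (f := fun y => pd j (fun y => z y k) y + pd k (fun y => z y j) y)
        ((diff_pd (hzk k) j).add (diff_pd (hzk j) k)) (1/2) i x,
      pd_add (diff_pd (hzk k) j) (diff_pd (hzk j) k) i x]
  have hκsym : ∀ x : V, SymTriadic (fun l m n => gradStrain z l m n x) := by
    intro x i j k
    show gradStrain z i j k x = gradStrain z i k j x
    unfold gradStrain
    apply pd_congr
    funext y
    unfold strain; ring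
  have hTsym : ∀ (κ : Fin 3 → Fin 3 → Fin 3 → ℝ) (i j k : Fin 3),
      Hcontr H κ i j k = Hcontr H κ i k j := by
    intro κ i j k
    unfold Hcontr
    exact Finset.sum_congr rfl fun l _ => Finset.sum_congr rfl fun m _ =>
      Finset.sum_congr rfl fun n _ => by rw [(hH i j k l m n).1]
  have heq2' : ∀ (x : V) (i j k : Fin 3), Hcontr H (χ x) i j k
      = Hcontr H (fun l m n => gradStrain z l m n x) i j k := by
    intro x i j k; have h := heq2 x i j k; linarith
  -- the two sides of the integrated identity
  have hPQ : (∫ x : V, ∑ k : Fin 3, z x k * navier lam mu z k x)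
      = ∫ x : V, ∑ k : Fin 3, z x k
          * ∑ i : Fin 3, ∑ j : Fin 3, pd i (pd j (fun y => Hcontr H (χ y) i j k)) x := by
    congr 1
    funext x
    refine Finset.sum_congr rfl fun k _ => ?_
    have h := heq1 x k
    have h2 : navier lam mu z k x
        = ∑ i : Fin 3, ∑ j : Fin 3, pd i (pd j (fun y => Hcontr H (χ y) i j k)) x := by
      linarith
    rw [h2]
  -- continuity facts
  have hvlapc : ∀ k : Fin 3, Continuous (vlap z k) := by
    intro k
    unfold vlap
    exact continuous_finset_sum _ fun j _ => (contDiff_pd (contDiff_pd (hzk k) j) j).continuous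
  -- left side evaluation
  have hLk : ∀ k : Fin 3, (∫ x : V, z x k * navier lam mu z k x)
      = -(mu * ∑ j : Fin 3, ∫ x : V, pd j (fun y => z y k) x * pd j (fun y => z y k) x)
        - (lam + mu) * ∫ x : V, pd k (fun y => z y k) x * divg z x := by
    intro k
    have e1 : (fun x : V => z x k * navier lam mu z k x)
        = fun x : V => mu * (z x k * vlap z k x)
            + (lam + mu) * (z x k * pd k (divg z) x) := by
      funext x; unfold navier; ring
    have i1 : Integrable (fun x : V => z x k * vlap z k x) :=
      integ_mul_left (hzk k).continuous (hvlapc k) (hzkc k)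
    have i2 : Integrable (fun x : V => z x k * pd k (divg z) x) :=
      integ_mul_left (hzk k).continuous (contDiff_pd hdivg k).continuous (hzkc k)
    rw [e1, integral_add (i1.const_mul mu) (i2.const_mul (lam + mu)),
      integral_const_mul, integral_const_mul]
    have e2 : (fun x : V => z x k * vlap z k x)
        = fun x : V => ∑ j : Fin 3, z x k * pd j (pd j (fun y => z y k)) x := by
      funext x; unfold vlap; rw [Finset.mul_sum]
    have i3 : ∀ j : Fin 3, Integrable (fun x : V => z x k * pd j (pd j (fun y => z y k)) x) :=
      fun j => integ_mul_left (hzk k).continuous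
        (contDiff_pd (contDiff_pd (hzk k) j) j).continuous (hzkc k)
    have e4 : (∫ x : V, z x k * vlap z k x)
        = ∑ j : Fin 3, ∫ x : V, z x k * pd j (pd j (fun y => z y k)) x := by
      rw [e2]; exact integral_finset_sum _ fun j _ => i3 j
    have e5 : ∀ j : Fin 3, (∫ x : V, z x k * pd j (pd j (fun y => z y k)) x)
        = - ∫ x : V, pd j (fun y => z y k) x * pd j (fun y => z y k) x := fun j =>
      ibp j (hzk k) (contDiff_pd (hzk k) j) (hzkc k)
    have e6 : (∫ x : V, z x k * pd k (divg z) x)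
        = - ∫ x : V, pd k (fun y => z y k) x * divg z x :=
      ibp k (hzk k) hdivg (hzkc k)
    rw [e4, e6, Finset.sum_congr rfl fun j _ => e5 j, Finset.sum_neg_distrib]
    ring
  -- right side per-term evaluation
  have hRk : ∀ k i j : Fin 3,
      (∫ x : V, z x k * pd i (pd j (fun y => Hcontr H (χ y) i j k)) x)
      = ∫ x : V, pd i (pd j (fun y => z y k)) x * Hcontr H (χ x) i j k := by
    intro k i j
    have s1 : (∫ x : V, z x k * pd i (pd j (fun y => Hcontr H (χ y) i j k)) x)
        = - ∫ x : V, pd i (fun y => z y k) x * pd j (fun y => Hcontr H (χ y) i j k) x :=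
      ibp i (hzk k) (contDiff_pd (hT i j k) j) (hzkc k)
    have s2 : (∫ x : V, pd i (fun y => z y k) x * pd j (fun y => Hcontr H (χ y) i j k) x)
        = - ∫ x : V, pd j (pd i (fun y => z y k)) x * Hcontr H (χ x) i j k :=
      ibp j (contDiff_pd (hzk k) i) (hT i j k) (hcs_pd (hzkc k) i)
    have s3 : (fun x : V => pd j (pd i (fun y => z y k)) x * Hcontr H (χ x) i j k)
        = fun x : V => pd i (pd j (fun y => z y k)) x * Hcontr H (χ x) i j k := by
      funext x; rw [pd_comm (hzk k) j i x]
    rw [s1, s2, neg_neg, s3]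
  -- integrability of right side inner terms
  have iR : ∀ k i j : Fin 3,
      Integrable (fun x : V => z x k * pd i (pd j (fun y => Hcontr H (χ y) i j k)) x) :=
    fun k i j => integ_mul_left (hzk k).continuous
      (contDiff_pd (contDiff_pd (hT i j k) j) i).continuous (hzkc k)
  have iR2 : ∀ k i j : Fin 3,
      Integrable (fun x : V => pd i (pd j (fun y => z y k)) x * Hcontr H (χ x) i j k) :=
    fun k i j => integ_mul_right
      (contDiff_pd (contDiff_pd (hzk k) j) i).continuous (hT i j k).continuous (hTc i j k)
  -- right side evaluation
  have hR : (∫ x : V, ∑ k : Fin 3, z x k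
          * ∑ i : Fin 3, ∑ j : Fin 3, pd i (pd j (fun y => Hcontr H (χ y) i j k)) x)
      = ∫ x : V, ∑ k : Fin 3, ∑ i : Fin 3, ∑ j : Fin 3,
          pd i (pd j (fun y => z y k)) x * Hcontr H (χ x) i j k := by
    have e1 : (fun x : V => ∑ k : Fin 3, z x k
          * ∑ i : Fin 3, ∑ j : Fin 3, pd i (pd j (fun y => Hcontr H (χ y) i j k)) x)
        = fun x : V => ∑ k : Fin 3, ∑ i : Fin 3, ∑ j : Fin 3,
            z x k * pd i (pd j (fun y => Hcontr H (χ y) i j k)) x := by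
      funext x
      refine Finset.sum_congr rfl fun k _ => ?_
      rw [Finset.mul_sum]
      exact Finset.sum_congr rfl fun i _ => by rw [Finset.mul_sum]
    rw [e1]
    rw [integral_finset_sum _ fun k _ => integrable_finset_sum _ fun i _ =>
      integrable_finset_sum _ fun j _ => iR k i j]
    rw [integral_finset_sum _ fun k _ => integrable_finset_sum _ fun i _ =>
      integrable_finset_sum _ fun j _ => iR2 k i j]
    refine Finset.sum_congr rfl fun k _ => ?_
    rw [integral_finset_sum _ fun i _ => integrable_finset_sum _ fun j _ => iR k i j,
      integral_finset_sum _ fun i _ => integrable_finset_sum _ fun j _ => iR2 k i j]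
    refine Finset.sum_congr rfl fun i _ => ?_
    rw [integral_finset_sum _ fun j _ => iR k i j,
      integral_finset_sum _ fun j _ => iR2 k i j]
    exact Finset.sum_congr rfl fun j _ => hRk k i j
  -- pointwise transformation of the right integrand
  have hpt : ∀ x : V, (∑ k : Fin 3, ∑ i : Fin 3, ∑ j : Fin 3,
        pd i (pd j (fun y => z y k)) x * Hcontr H (χ x) i j k)
      = ∑ i : Fin 3, ∑ j : Fin 3, ∑ k : Fin 3, gradStrain z i j k x
          * Hcontr H (fun l m n => gradStrain z l m n x) i j k := by
    intro x
    rw [sum_rot (fun k i j => pd i (pd j (fun y => z y k)) x * Hcontr H (χ x) i j k)]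
    refine Finset.sum_congr rfl fun i _ => ?_
    rw [sym_pair_sum (fun j k => pd i (pd j (fun y => z y k)) x)
      (fun j k => Hcontr H (χ x) i j k) (fun j k => hTsym (χ x) i j k)]
    refine Finset.sum_congr rfl fun j _ => Finset.sum_congr rfl fun k _ => ?_
    rw [← hgs i j k x, heq2' x i j k]
  -- nonnegativity of the right side
  have hRnn : (0:ℝ) ≤ ∫ x : V, ∑ i : Fin 3, ∑ j : Fin 3, ∑ k : Fin 3,
      gradStrain z i j k x * Hcontr H (fun l m n => gradStrain z l m n x) i j k := by
    refine integral_nonneg fun x => ?_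
    have hp := hpos (fun l m n => gradStrain z l m n x) (hκsym x)
    have hexp := expand_contr H (fun l m n => gradStrain z l m n x)
    have hS : (0:ℝ) ≤ ∑ i : Fin 3, ∑ j : Fin 3, ∑ k : Fin 3, (gradStrain z i j k x)^2 :=
      Finset.sum_nonneg fun i _ => Finset.sum_nonneg fun j _ =>
        Finset.sum_nonneg fun k _ => sq_nonneg _
    have := mul_nonneg hα.le hS
    simp only [Pi.zero_apply] at *
    nlinarith [hp, hexp]
  -- combine
  have hIs : ∀ j k : Fin 3,
      (0:ℝ) ≤ ∫ x : V, pd j (fun y => z y k) x * pd j (fun y => z y k) x :=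
    fun j k => integral_nonneg fun x => mul_self_nonneg _
  have hB : (0:ℝ) ≤ ∫ x : V, divg z x * divg z x :=
    integral_nonneg fun x => mul_self_nonneg _
  have hDD : (∑ k : Fin 3, ∫ x : V, pd k (fun y => z y k) x * divg z x)
      = ∫ x : V, divg z x * divg z x := by
    rw [← integral_finset_sum _ fun k _ => integ_mul_left
      (contDiff_pd (hzk k) k).continuous hdivg.continuous (hcs_pd (hzkc k) k)]
    congr 1
    funext x
    rw [← Finset.sum_mul]
    rfl
  have hL : (∫ x : V, ∑ k : Fin 3, z x k * navier lam mu z k x)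
      = -(mu * ∑ k : Fin 3, ∑ j : Fin 3,
            ∫ x : V, pd j (fun y => z y k) x * pd j (fun y => z y k) x)
        - (lam + mu) * ∫ x : V, divg z x * divg z x := by
    rw [integral_finset_sum _ fun k _ => integ_mul_left (hzk k).continuous
      (by
        unfold navier
        exact (continuous_const.mul (hvlapc k)).add
          (continuous_const.mul (contDiff_pd hdivg k).continuous)) (hzkc k)]
    rw [Finset.sum_congr rfl fun k _ => hLk k]
    rw [← hDD]
    simp only [Finset.sum_add_distrib, Finset.sum_sub_distrib, Finset.sum_neg_distrib,
      ← Finset.mul_sum]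
  -- the master identity
  have hmaster : -(mu * ∑ k : Fin 3, ∑ j : Fin 3,
        ∫ x : V, pd j (fun y => z y k) x * pd j (fun y => z y k) x)
      - (lam + mu) * (∫ x : V, divg z x * divg z x)
      = ∫ x : V, ∑ i : Fin 3, ∑ j : Fin 3, ∑ k : Fin 3,
          gradStrain z i j k x * Hcontr H (fun l m n => gradStrain z l m n x) i j k := by
    rw [← hL, hPQ, hR]
    congr 1
    funext x
    exact hpt x
  have hSI : (0:ℝ) ≤ ∑ k : Fin 3, ∑ j : Fin 3,
      ∫ x : V, pd j (fun y => z y k) x * pd j (fun y => z y k) x :=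
    Finset.sum_nonneg fun k _ => Finset.sum_nonneg fun j _ => hIs j k
  have hSI0 : (∑ k : Fin 3, ∑ j : Fin 3,
      ∫ x : V, pd j (fun y => z y k) x * pd j (fun y => z y k) x) = 0 := by
    nlinarith [hmaster, hRnn, hB, hSI]
  have hI0 : ∀ k j : Fin 3,
      (∫ x : V, pd j (fun y => z y k) x * pd j (fun y => z y k) x) = 0 := by
    intro k j
    have h1 := (Finset.sum_eq_zero_iff_of_nonneg fun k _ =>
      Finset.sum_nonneg fun j _ => hIs j k).mp hSI0 k (Finset.mem_univ k)
    exact (Finset.sum_eq_zero_iff_of_nonneg fun j _ => hIs j k).mp h1 j (Finset.mem_univ j)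
  have hpd0 : ∀ (j k : Fin 3) (x : V), pd j (fun y => z y k) x = 0 := by
    intro j k x
    have h0 := zero_of_integral_zero
      ((contDiff_pd (hzk k) j).continuous.mul (contDiff_pd (hzk k) j).continuous)
      (fun x => mul_self_nonneg _) ((hcs_pd (hzkc k) j).mul_right) (hI0 k j) x
    exact mul_self_eq_zero.mp h0
  have hz0 : ∀ x : V, z x = 0 := fun x =>
    funext fun k => zero_of_pd_zero (hzk k) (hzkc k) (fun i y => hpd0 i k y) x
  have hκ0 : ∀ (i j k : Fin 3) (x : V), gradStrain z i j k x = 0 := by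
    intro i j k x
    have h1 : pd i (pd j (fun y => z y k)) x = pd i (fun _ => (0:ℝ)) x :=
      pd_congr (funext (hpd0 j k)) i x
    have h2 : pd i (pd k (fun y => z y j)) x = pd i (fun _ => (0:ℝ)) x :=
      pd_congr (funext (hpd0 k j)) i x
    rw [hgs i j k x, h1, h2, pd_const]
    ring
  refine ⟨hz0, fun x i j k => ?_⟩
  have hHχ0 : ∀ i j k : Fin 3, Hcontr H (χ x) i j k = 0 := by
    intro i j k
    rw [heq2' x i j k]
    have h3 : (fun l m n => gradStrain z l m n x) = fun _ _ _ => (0:ℝ) :=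
      funext fun l => funext fun m => funext fun n => hκ0 l m n x
    rw [h3]
    simp [Hcontr]
  have hp := hpos (χ x) (hsym x)
  have hexp := expand_contr H (χ x)
  have hsum0 : (∑ i : Fin 3, ∑ j : Fin 3, ∑ k : Fin 3, ∑ l : Fin 3, ∑ m : Fin 3, ∑ n : Fin 3,
      χ x i j k * H i j k l m n * χ x l m n) = 0 := by
    rw [← hexp]
    refine Finset.sum_eq_zero fun i _ => Finset.sum_eq_zero fun j _ =>
      Finset.sum_eq_zero fun k _ => ?_
    rw [hHχ0 i j k, mul_zero]
  have hSχ : (0:ℝ) ≤ ∑ i : Fin 3, ∑ j : Fin 3, ∑ k : Fin 3, (χ x i j k)^2 :=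
    Finset.sum_nonneg fun i _ => Finset.sum_nonneg fun j _ =>
      Finset.sum_nonneg fun k _ => sq_nonneg _
  have hSχ0 : (∑ i : Fin 3, ∑ j : Fin 3, ∑ k : Fin 3, (χ x i j k)^2) = 0 := by
    nlinarith [hp, hsum0, hSχ]
  have h1 := (Finset.sum_eq_zero_iff_of_nonneg fun i _ =>
    Finset.sum_nonneg fun j _ => Finset.sum_nonneg fun k _ => sq_nonneg (χ x i j k)).mp
    hSχ0 i (Finset.mem_univ i)
  have h2 := (Finset.sum_eq_zero_iff_of_nonneg fun j _ =>
    Finset.sum_nonneg fun k _ => sq_nonneg (χ x i j k)).mp h1 j (Finset.mem_univ j)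
  have h3 := (Finset.sum_eq_zero_iff_of_nonneg fun k _ => sq_nonneg (χ x i j k)).mp
    h2 k (Finset.mem_univ k)
  exact (pow_eq_zero_iff two_ne_zero).mp h3
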